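/- Let $a,b>0$, $N\geq 5$ an integer, $h(t)=t^{N-4}-at^{N-2}$, and for $c\in(0,c^*)$ with $c^*=\frac{a^2}{N(N-4)b}$ let $\tau_c=\sqrt{\frac{(N-2)a-2\sqrt{a^2-N(N-4)bc}}{N(a^2+4bc)}}$ and $\tau^c=\sqrt{\frac{(N-2)a+2\sqrt{a^2-N(N-4)bc}}{N(a^2+4bc)}}$. Then $h(\tau^c)<h(\tau_c)$ for every $c\in(0,c^*)$. -/

import Mathlib

private lemma hasDerivAt_L {x : ℝ} (h1 : (0:ℝ) < 1 + x) (h2 : (0:ℝ) < 1 - x) :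
    HasDerivAt (fun y : ℝ => Real.log (1+y) - Real.log (1-y)) ((1+x)⁻¹ + (1-x)⁻¹) x := by
  have ha : HasDerivAt (fun y : ℝ => Real.log (1+y)) ((1+x)⁻¹) x := by
    have h := (Real.hasDerivAt_log (ne_of_gt h1)).comp x ((hasDerivAt_id x).const_add 1)
    simpa [Function.comp_def] using h
  have hb : HasDerivAt (fun y : ℝ => Real.log (1-y)) (-(1-x)⁻¹) x := by
    have h := (Real.hasDerivAt_log (ne_of_gt h2)).comp x ((hasDerivAt_id x).const_sub 1)
    simpa [Function.comp_def] using h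
  have := ha.sub hb
  simpa [Pi.sub_def] using this

private lemma lemB {v : ℝ} (hv0 : 0 ≤ v) (hv1 : v < 1) :
    2*v + (2/3)*v^3 ≤ Real.log (1+v) - Real.log (1-v) := by
  set f : ℝ → ℝ := fun x => Real.log (1+x) - Real.log (1-x) - (2*x + (2/3)*x^3) with hf
  have hder : ∀ x ∈ Set.Ico (0:ℝ) 1,
      HasDerivAt f ((1+x)⁻¹ + (1-x)⁻¹ - (2 + 2*x^2)) x := by
    intro x hx
    have h1 : (0:ℝ) < 1 + x := by linarith [hx.1]
    have h2 : (0:ℝ) < 1 - x := by linarith [hx.2]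
    have hp : HasDerivAt (fun x : ℝ => 2*x + (2/3)*x^3) (2 + 2*x^2) x := by
      have : HasDerivAt (fun y : ℝ => 2 * y + 2/3 * y^3) (2 * 1 + 2/3 * ((3:ℕ) * x^2)) x :=
        ((hasDerivAt_id x).const_mul 2).add ((hasDerivAt_pow 3 x).const_mul (2/3))
      convert this using 1
      ring
    exact (hasDerivAt_L h1 h2).sub hp
  have hmono : MonotoneOn f (Set.Ico (0:ℝ) 1) := by
    apply monotoneOn_of_deriv_nonneg (convex_Ico 0 1)
    · exact fun x hx => (hder x hx).differentiableAt.continuousAt.continuousWithinAt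
    · rw [interior_Ico]
      exact fun x hx =>
        (hder x ⟨hx.1.le, hx.2⟩).differentiableAt.differentiableWithinAt
    · rw [interior_Ico]
      intro x hx
      rw [(hder x ⟨hx.1.le, hx.2⟩).deriv]
      have h1 : (0:ℝ) < 1 + x := by linarith [hx.1]
      have h2 : (0:ℝ) < 1 - x := by linarith [hx.2]
      have e : (1+x)⁻¹ + (1-x)⁻¹ - (2 + 2*x^2) = 2*x^4 / ((1+x)*(1-x)) := by
        field_simp
        ring
      rw [e]
      exact div_nonneg (by positivity) (mul_pos h1 h2).le
  have h0 : f 0 = 0 := by simp [hf]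
  have hle := hmono (Set.mem_Ico.mpr ⟨le_refl 0, one_pos⟩) (Set.mem_Ico.mpr ⟨hv0, hv1⟩) hv0
  rw [h0] at hle
  have : 0 ≤ Real.log (1+v) - Real.log (1-v) - (2*v + (2/3)*v^3) := hle
  linarith

private lemma lemA {u : ℝ} (hu0 : 0 ≤ u) (hu1 : u ≤ 2/3) :
    Real.log (1+u) - Real.log (1-u) ≤ 2*u + (6/5)*u^3 := by
  set f : ℝ → ℝ := fun x => 2*x + (6/5)*x^3 - (Real.log (1+x) - Real.log (1-x)) with hf
  have hder : ∀ x ∈ Set.Icc (0:ℝ) (2/3),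
      HasDerivAt f (2 + (18/5)*x^2 - ((1+x)⁻¹ + (1-x)⁻¹)) x := by
    intro x hx
    have h1 : (0:ℝ) < 1 + x := by linarith [hx.1]
    have h2 : (0:ℝ) < 1 - x := by linarith [hx.2]
    have hp : HasDerivAt (fun x : ℝ => 2*x + (6/5)*x^3) (2 + (18/5)*x^2) x := by
      have : HasDerivAt (fun y : ℝ => 2 * y + 6/5 * y^3) (2 * 1 + 6/5 * ((3:ℕ) * x^2)) x :=
        ((hasDerivAt_id x).const_mul 2).add ((hasDerivAt_pow 3 x).const_mul (6/5))
      convert this using 1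
      ring
    exact hp.sub (hasDerivAt_L h1 h2)
  have hmono : MonotoneOn f (Set.Icc (0:ℝ) (2/3)) := by
    apply monotoneOn_of_deriv_nonneg (convex_Icc 0 (2/3))
    · exact fun x hx => (hder x hx).differentiableAt.continuousAt.continuousWithinAt
    · rw [interior_Icc]
      exact fun x hx =>
        (hder x ⟨hx.1.le, hx.2.le⟩).differentiableAt.differentiableWithinAt
    · rw [interior_Icc]
      intro x hx
      rw [(hder x ⟨hx.1.le, hx.2.le⟩).deriv]
      have h1 : (0:ℝ) < 1 + x := by linarith [hx.1]
      have h2 : (0:ℝ) < 1 - x := by nlinarith [hx.2]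
      have e : 2 + (18/5)*x^2 - ((1+x)⁻¹ + (1-x)⁻¹)
          = x^2*(8 - 18*x^2) / (5*((1+x)*(1-x))) := by
        field_simp
        ring
      rw [e]
      apply div_nonneg
      · have h3 : x^2 ≤ 4/9 := by nlinarith [hx.1.le, hx.2.le]
        exact mul_nonneg (sq_nonneg x) (by nlinarith)
      · nlinarith [mul_pos h1 h2]
  have h0 : f 0 = 0 := by simp [hf]
  have hle := hmono (Set.mem_Icc.mpr ⟨le_refl 0, by norm_num⟩)
    (Set.mem_Icc.mpr ⟨hu0, hu1⟩) hu0
  rw [h0] at hle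
  have : 0 ≤ 2*u + (6/5)*u^3 - (Real.log (1+u) - Real.log (1-u)) := hle
  linarith

private lemma key_ineq {a D : ℝ} (ha : 0 < a) (hD0 : 0 < D) (hDa : D < a)
    {n : ℕ} (hn : 3 ≤ n) :
    ((n:ℝ)*a + 2*D)^n * (a-D)^2 < ((n:ℝ)*a - 2*D)^n * (a+D)^2 := by
  have hn3 : (3:ℝ) ≤ (n:ℝ) := by exact_mod_cast hn
  have hna : 0 < (n:ℝ)*a := by positivity
  set u : ℝ := 2*D/((n:ℝ)*a) with hu
  set v : ℝ := D/a with hv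
  have hv0 : 0 < v := by positivity
  have hv1 : v < 1 := (div_lt_one ha).mpr hDa
  have hu0 : 0 < u := by positivity
  have hu23 : u ≤ 2/3 := by
    rw [hu, div_le_iff₀ hna]
    nlinarith
  have hu1 : u < 1 := by linarith
  have hBv := lemB hv0.le hv1
  have hAu := lemA hu0.le hu23
  have huv : (n:ℝ) * u = 2 * v := by
    rw [hu, hv]
    field_simp
  have hu3 : (n:ℝ) * u^3 ≤ (8/9) * v^3 := by
    have e : (n:ℝ) * u^3 = 8 * v^3 / (n:ℝ)^2 := by
      rw [hu, hv]
      field_simp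
      ring
    rw [e, div_le_iff₀ (by positivity)]
    have h9 : (9:ℝ) ≤ (n:ℝ)^2 := by nlinarith
    nlinarith [mul_nonneg (pow_pos hv0 3).le (sub_nonneg.mpr h9)]
  have hlog : (n:ℝ) * (Real.log (1+u) - Real.log (1-u))
      < 2 * (Real.log (1+v) - Real.log (1-v)) := by
    have h1 : (n:ℝ) * (Real.log (1+u) - Real.log (1-u)) ≤ (n:ℝ) * (2*u + (6/5)*u^3) :=
      mul_le_mul_of_nonneg_left hAu (by positivity)
    have h2 : (n:ℝ) * (2*u + (6/5)*u^3) < 2 * (2*v + (2/3)*v^3) := by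
      nlinarith [huv, hu3, pow_pos hv0 3]
    nlinarith [hBv]
  have h1u : (0:ℝ) < 1 + u := by linarith
  have h2u : (0:ℝ) < 1 - u := by linarith
  have h1v : (0:ℝ) < 1 + v := by linarith
  have h2v : (0:ℝ) < 1 - v := by linarith
  have hcore : (1+u)^n * (1-v)^2 < (1-u)^n * (1+v)^2 := by
    have e1 : (n:ℝ)*Real.log (1+u) + 2*Real.log (1-v)
        = Real.log ((1+u)^n * (1-v)^2) := by
      rw [Real.log_mul (by positivity) (by positivity), Real.log_pow, Real.log_pow]
      push_cast
      ring
    have e2 : (n:ℝ)*Real.log (1-u) + 2*Real.log (1+v)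
        = Real.log ((1-u)^n * (1+v)^2) := by
      rw [Real.log_mul (by positivity) (by positivity), Real.log_pow, Real.log_pow]
      push_cast
      ring
    have hE : Real.exp ((n:ℝ)*Real.log (1+u) + 2*Real.log (1-v))
        < Real.exp ((n:ℝ)*Real.log (1-u) + 2*Real.log (1+v)) := by
      apply Real.exp_lt_exp.mpr
      linarith [hlog]
    rw [e1, e2, Real.exp_log (by positivity), Real.exp_log (by positivity)] at hE
    exact hE
  have hy : (n:ℝ)*a + 2*D = ((n:ℝ)*a) * (1+u) := by
    rw [hu]
    field_simp
    try ring
  have hx : (n:ℝ)*a - 2*D = ((n:ℝ)*a) * (1-u) := by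
    rw [hu]
    field_simp
    try ring
  have haD1 : a + D = a * (1+v) := by
    rw [hv]
    field_simp
    try ring
  have haD2 : a - D = a * (1-v) := by
    rw [hv]
    field_simp
    try ring
  have e1 : ((n:ℝ)*a + 2*D)^n * (a-D)^2
      = (n:ℝ)^n * a^n * a^2 * ((1+u)^n * (1-v)^2) := by
    rw [hy, haD2, mul_pow, mul_pow, mul_pow]
    ring
  have e2 : ((n:ℝ)*a - 2*D)^n * (a+D)^2
      = (n:ℝ)^n * a^n * a^2 * ((1-u)^n * (1+v)^2) := by
    rw [hx, haD1, mul_pow, mul_pow, mul_pow]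
    ring
  rw [e1, e2]
  exact mul_lt_mul_of_pos_left hcore (by positivity)

theorem stmt_17 (a b : ℝ) (ha : 0 < a) (hb : 0 < b) (N : ℕ) (hN : 5 ≤ N)
    (h : ℝ → ℝ) (hh : ∀ t, h t = t ^ (N - 4) - a * t ^ (N - 2))
    (cstar : ℝ) (hcstar : cstar = a ^ 2 / ((N : ℝ) * ((N : ℝ) - 4) * b))
    (c : ℝ) (hc : c ∈ Set.Ioo 0 cstar)
    (τc τC : ℝ)
    (hτc : τc = Real.sqrt ((((N : ℝ) - 2) * a - 2 * Real.sqrt (a ^ 2 - (N : ℝ) * ((N : ℝ) - 4) * b * c)) /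
      ((N : ℝ) * (a ^ 2 + 4 * b * c))))
    (hτC : τC = Real.sqrt ((((N : ℝ) - 2) * a + 2 * Real.sqrt (a ^ 2 - (N : ℝ) * ((N : ℝ) - 4) * b * c)) /
      ((N : ℝ) * (a ^ 2 + 4 * b * c)))) :
    h τC < h τc := by
  obtain ⟨hc0, hcc⟩ := hc
  have hN5 : (5:ℝ) ≤ (N:ℝ) := by exact_mod_cast hN
  have hK : 0 < (N:ℝ) * ((N:ℝ) - 4) * b := by
    have : (0:ℝ) < (N:ℝ) := by linarith
    have : (0:ℝ) < (N:ℝ) - 4 := by linarith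
    positivity
  have hKc : (N:ℝ) * ((N:ℝ) - 4) * b * c < a^2 := by
    rw [hcstar, lt_div_iff₀ hK] at hcc
    nlinarith [hcc]
  have hD2pos : 0 < a^2 - (N:ℝ) * ((N:ℝ) - 4) * b * c := by linarith
  set D : ℝ := Real.sqrt (a ^ 2 - (N : ℝ) * ((N : ℝ) - 4) * b * c) with hD
  have hD0 : 0 < D := Real.sqrt_pos.mpr hD2pos
  have hDsq : D^2 = a^2 - (N:ℝ) * ((N:ℝ) - 4) * b * c := Real.sq_sqrt hD2pos.le
  have hDa : D < a := by
    nlinarith [hDsq, hD0, hK, hc0, mul_pos hK hc0]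
  set M : ℝ := (N:ℝ) * (a ^ 2 + 4 * b * c) with hM
  have hMpos : 0 < M := by
    have h1 : (0:ℝ) < (N:ℝ) := by linarith
    have h2 : (0:ℝ) < a^2 + 4*b*c := by positivity
    positivity
  set x : ℝ := ((N:ℝ) - 2) * a - 2 * D with hxdef
  set y : ℝ := ((N:ℝ) - 2) * a + 2 * D with hydef
  have hxpos : 0 < x := by
    rw [hxdef]
    nlinarith
  have hypos : 0 < y := by
    rw [hydef]
    nlinarith
  have hw : (0:ℝ) < (N:ℝ) - 4 := by linarith
  -- squares of tau
  have hτcsq : τc^2 = x / M := by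
    rw [hτc]
    exact Real.sq_sqrt (by positivity)
  have hτCsq : τC^2 = y / M := by
    rw [hτC]
    exact Real.sq_sqrt (by positivity)
  have hτcnn : 0 ≤ τc := by rw [hτc]; exact Real.sqrt_nonneg _
  have hτCnn : 0 ≤ τC := by rw [hτC]; exact Real.sqrt_nonneg _
  -- the key factorisations
  have ex : M - a*x = 2*(a+D)*x/((N:ℝ)-4) := by
    rw [eq_div_iff hw.ne']
    rw [hxdef, hM]
    linear_combination (4:ℝ) * hDsq
  have ey : M - a*y = 2*(a-D)*y/((N:ℝ)-4) := by
    rw [eq_div_iff hw.ne']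
    rw [hydef, hM]
    linear_combination (4:ℝ) * hDsq
  have hfx : 1 - a * (x / M) = 2 * (a + D) * x / (((N:ℝ) - 4) * M) := by
    have e0 : 1 - a*(x/M) = (M - a*x)/M := by field_simp
    rw [e0, ex, div_div]
  have hfy : 1 - a * (y / M) = 2 * (a - D) * y / (((N:ℝ) - 4) * M) := by
    have e0 : 1 - a*(y/M) = (M - a*y)/M := by field_simp
    rw [e0, ey, div_div]
  -- rewrite h
  set m : ℕ := N - 4 with hm
  have hm2 : N - 2 = m + 2 := by omega
  have hrw : ∀ t : ℝ, h t = t^m * (1 - a * t^2) := by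
    intro t
    rw [hh t, hm2]
    rw [pow_add]
    ring
  have hhc : h τc = τc^m * (2 * (a + D) * x / (((N:ℝ) - 4) * M)) := by
    rw [hrw, hτcsq, hfx]
  have hhC : h τC = τC^m * (2 * (a - D) * y / (((N:ℝ) - 4) * M)) := by
    rw [hrw, hτCsq, hfy]
  -- positivity of h τc
  have hhcpos : 0 < h τc := by
    rw [hhc]
    have hτcpos : 0 < τc := by
      rw [hτc]
      apply Real.sqrt_pos.mpr
      positivity
    positivity
  -- key inequality with n = N - 2
  set n : ℕ := N - 2 with hn
  have hn3 : 3 ≤ n := by omega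
  have hncast : ((n:ℝ)) = (N:ℝ) - 2 := by
    rw [hn]
    push_cast [Nat.cast_sub (by omega : 2 ≤ N)]
    ring
  have hkey : y^n * (a-D)^2 < x^n * (a+D)^2 := by
    have := key_ineq ha hD0 hDa hn3
    rw [hncast] at this
    have ey : (((N:ℝ) - 2)*a + 2*D) = y := by rw [hydef]
    have ex : (((N:ℝ) - 2)*a - 2*D) = x := by rw [hxdef]
    rw [ey, ex] at this
    exact this
  have hnm : n = m + 2 := by omega
  -- compare squares
  have hsq : (h τC)^2 < (h τc)^2 := by
    rw [hhc, hhC]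
    have hden1 : (0:ℝ) < M^m * ((((N:ℝ) - 4))*M)^2 :=
      mul_pos (pow_pos hMpos m) (pow_pos (mul_pos hw hMpos) 2)
    have hden2 : (0:ℝ) < (((N:ℝ) - 4))^2 * M^n :=
      mul_pos (pow_pos hw 2) (pow_pos hMpos n)
    have e1 : (τC^m * (2 * (a - D) * y / (((N:ℝ) - 4) * M)))^2
        = (y^n * (a-D)^2) * (4 / ((((N:ℝ) - 4))^2 * M^n)) := by
      rw [mul_pow, ← pow_mul, mul_comm m 2, pow_mul, hτCsq]
      rw [div_pow, div_pow, div_mul_div_comm, mul_div_assoc',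
        div_eq_div_iff hden1.ne' hden2.ne', hnm, pow_add]
      ring
    have e2 : (τc^m * (2 * (a + D) * x / (((N:ℝ) - 4) * M)))^2
        = (x^n * (a+D)^2) * (4 / ((((N:ℝ) - 4))^2 * M^n)) := by
      rw [mul_pow, ← pow_mul, mul_comm m 2, pow_mul, hτcsq]
      rw [div_pow, div_pow, div_mul_div_comm, mul_div_assoc',
        div_eq_div_iff hden1.ne' hden2.ne', hnm, pow_add]
      ring
    rw [e1, e2]
    apply mul_lt_mul_of_pos_right hkey
    positivity
  exact lt_of_pow_lt_pow_left₀ 2 hhcpos.le hsq
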